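/- Fix an integer j ≥ 1 and suppose U_j, U_{j+1} : (0,∞) → [0,∞) are continuous with U_j differentiable, U_j(t) ≤ C₀ t^{-1-2j} for all t > 0, and |U_j'(s)| ≤ 2√(U_j(s) U_{j+1}(s)) for all s > 0. Then there is a constant C depending only on j such that ∫₀^∞ t^{2j−1} U_j(t) dt ≤ C ∫₀^∞ s^{2j+1} U_{j+1}(s) ds. -/

import Mathlib

open MeasureTheory

lemma amgm (j : ℕ) (hj : 1 ≤ j) (a b t : ℝ) (ht : 0 < t) (ha : 0 ≤ a) (hb : 0 ≤ b) :
    2 * Real.sqrt (a * b) ≤ (j / t) * a + (t / j) * b := by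
  have hjpos : (0:ℝ) < j := by positivity
  have hx : (0:ℝ) ≤ (j / t) * a := by positivity
  have hy : (0:ℝ) ≤ (t / j) * b := by positivity
  have key : 2 * Real.sqrt ((j / t) * a) * Real.sqrt ((t / j) * b) ≤
      (j / t) * a + (t / j) * b := by
    nlinarith [two_mul_le_add_sq (Real.sqrt ((j / t) * a)) (Real.sqrt ((t / j) * b)),
      Real.sq_sqrt hx, Real.sq_sqrt hy]
  have hprod : Real.sqrt ((j / t) * a) * Real.sqrt ((t / j) * b) = Real.sqrt (a * b) := by
    rw [← Real.sqrt_mul hx]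
    congr 1
    field_simp
  rw [← hprod]
  linarith [key]

lemma key_ineq (j : ℕ) (hj : 1 ≤ j) (U U' V : ℝ → ℝ) (C₀ : ℝ)
    (hUc : ContinuousOn U (Set.Ioi 0)) (hVc : ContinuousOn V (Set.Ioi 0))
    (hU0 : ∀ t, 0 < t → 0 ≤ U t) (hV0 : ∀ t, 0 < t → 0 ≤ V t)
    (hder : ∀ t, 0 < t → HasDerivAt U (U' t) t)
    (hdecay : ∀ t, 0 < t → U t ≤ C₀ * t ^ ((-1 : ℝ) - 2 * (j : ℝ)))
    (hU' : ∀ s, 0 < s → |U' s| ≤ 2 * Real.sqrt (U s * V s))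
    (ε S : ℝ) (hε : 0 < ε) (hεS : ε ≤ S) :
    ∫ t in Set.Ioc ε S, t ^ (2*j-1) * U t ≤
      C₀ / S + ∫ s in Set.Ioc ε S, s ^ (2*j+1) * V s := by
  have hS : 0 < S := lt_of_lt_of_le hε hεS
  have hjpos : (0:ℝ) < j := by positivity
  have hsub : Set.Icc ε S ⊆ Set.Ioi 0 := fun x hx => lt_of_lt_of_le hε hx.1
  have h2j : 2*j - 1 + 1 = 2*j := by omega
  -- pointwise bound on the derivative term
  have hptw : ∀ t ∈ Set.Icc ε S,
      |t ^ (2*j) * U' t| ≤ (j:ℝ) * (t ^ (2*j-1) * U t) + (1/(j:ℝ)) * (t ^ (2*j+1) * V t) := by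
    intro t ht
    have htpos : 0 < t := hsub ht
    have h1 : |U' t| ≤ (↑j / t) * U t + (t / ↑j) * V t :=
      (hU' t htpos).trans (amgm j hj (U t) (V t) t htpos (hU0 t htpos) (hV0 t htpos))
    have h2 : |t ^ (2*j) * U' t| = t ^ (2*j) * |U' t| := by
      rw [abs_mul, abs_of_nonneg (by positivity : (0:ℝ) ≤ t ^ (2*j))]
    rw [h2]
    have h3 : t ^ (2*j) * ((↑j / t) * U t + (t / ↑j) * V t)
        = (j:ℝ) * (t ^ (2*j-1) * U t) + (1/(j:ℝ)) * (t ^ (2*j+1) * V t) := by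
      have e1 : t ^ (2*j) = t ^ (2*j-1) * t := by rw [← pow_succ, h2j]
      have e2 : t ^ (2*j+1) = t ^ (2*j) * t := by rw [pow_succ]
      rw [e2, e1]
      field_simp
    calc t ^ (2*j) * |U' t| ≤ t ^ (2*j) * ((↑j / t) * U t + (t / ↑j) * V t) :=
          mul_le_mul_of_nonneg_left h1 (by positivity)
      _ = _ := h3
  -- integrability facts
  have hUIcc : ContinuousOn U (Set.Icc ε S) := hUc.mono hsub
  have hVIcc : ContinuousOn V (Set.Icc ε S) := hVc.mono hsub
  have intA : IntegrableOn (fun t => t ^ (2*j-1) * U t) (Set.Ioc ε S) :=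
    (((continuous_pow (2*j-1)).continuousOn.mul hUIcc).integrableOn_Icc).mono_set
      Set.Ioc_subset_Icc_self
  have intV : IntegrableOn (fun t => t ^ (2*j+1) * V t) (Set.Ioc ε S) :=
    (((continuous_pow (2*j+1)).continuousOn.mul hVIcc).integrableOn_Icc).mono_set
      Set.Ioc_subset_Icc_self
  have hU'm : AEStronglyMeasurable U' (volume.restrict (Set.Ioc ε S)) := by
    refine (measurable_deriv U).aestronglyMeasurable.congr ?_
    filter_upwards [ae_restrict_mem measurableSet_Ioc] with x hx
    exact (hder x (hsub (Set.Ioc_subset_Icc_self hx))).deriv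
  have intG : IntegrableOn
      (fun t => (j:ℝ) * (t ^ (2*j-1) * U t) + (1/(j:ℝ)) * (t ^ (2*j+1) * V t))
      (Set.Ioc ε S) := (intA.const_mul _).add (intV.const_mul _)
  have intU' : IntegrableOn (fun t => t ^ (2*j) * U' t) (Set.Ioc ε S) := by
    refine Integrable.mono' intG ((continuous_pow (2*j)).aestronglyMeasurable.mul hU'm) ?_
    filter_upwards [ae_restrict_mem measurableSet_Ioc] with x hx
    exact hptw x (Set.Ioc_subset_Icc_self hx)
  have int2 : IntegrableOn (fun t => ((2*j : ℕ):ℝ) * t ^ (2*j-1) * U t) (Set.Ioc ε S) := by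
    have := intA.const_mul ((2*j:ℕ):ℝ)
    simpa [mul_assoc, IntegrableOn] using this
  -- FTC
  have hFTC : ∫ t in Set.Ioc ε S, (((2*j : ℕ):ℝ) * t ^ (2*j-1) * U t + t ^ (2*j) * U' t)
      = S ^ (2*j) * U S - ε ^ (2*j) * U ε := by
    rw [← intervalIntegral.integral_of_le hεS]
    refine intervalIntegral.integral_eq_sub_of_hasDerivAt
      (f := fun t => t ^ (2*j) * U t) ?_ ?_
    · intro t ht
      rw [Set.uIcc_of_le hεS] at ht
      exact (hasDerivAt_pow (2*j) t).mul (hder t (hsub ht))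
    · rw [intervalIntegrable_iff, Set.uIoc_of_le hεS]
      exact int2.add intU'
  have e0 : ∫ t in Set.Ioc ε S, ((2*j : ℕ):ℝ) * t ^ (2*j-1) * U t
      = ((2*j:ℕ):ℝ) * ∫ t in Set.Ioc ε S, t ^ (2*j-1) * U t := by
    simp only [mul_assoc]
    exact integral_const_mul ((2*j : ℕ):ℝ) fun t => t ^ (2*j-1) * U t
  have hsplit : ∫ t in Set.Ioc ε S, (((2*j : ℕ):ℝ) * t ^ (2*j-1) * U t + t ^ (2*j) * U' t)
      = ((2*j:ℕ):ℝ) * (∫ t in Set.Ioc ε S, t ^ (2*j-1) * U t)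
        + ∫ t in Set.Ioc ε S, t ^ (2*j) * U' t := by
    rw [integral_add int2 intU', e0]
  set A := ∫ t in Set.Ioc ε S, t ^ (2*j-1) * U t with hA
  set Bv := ∫ s in Set.Ioc ε S, s ^ (2*j+1) * V s with hBv
  set B := ∫ t in Set.Ioc ε S, t ^ (2*j) * U' t with hB
  have hAnn : 0 ≤ A := by
    refine setIntegral_nonneg measurableSet_Ioc fun x hx => ?_
    exact mul_nonneg (pow_nonneg (hsub (Set.Ioc_subset_Icc_self hx)).le _)
      (hU0 x (hsub (Set.Ioc_subset_Icc_self hx)))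
  have hBvnn : 0 ≤ Bv := by
    refine setIntegral_nonneg measurableSet_Ioc fun x hx => ?_
    exact mul_nonneg (pow_nonneg (hsub (Set.Ioc_subset_Icc_self hx)).le _)
      (hV0 x (hsub (Set.Ioc_subset_Icc_self hx)))
  -- |B| ≤ j A + (1/j) Bv
  have hBbound : |B| ≤ (j:ℝ) * A + (1/(j:ℝ)) * Bv := by
    calc |B| ≤ ∫ t in Set.Ioc ε S, |t ^ (2*j) * U' t| := by
          have hni := norm_integral_le_integral_norm (μ := volume.restrict (Set.Ioc ε S))
            (fun t => t ^ (2*j) * U' t)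
          simpa only [Real.norm_eq_abs] using hni
      _ ≤ ∫ t in Set.Ioc ε S,
            ((j:ℝ) * (t ^ (2*j-1) * U t) + (1/(j:ℝ)) * (t ^ (2*j+1) * V t)) := by
          refine setIntegral_mono_on intU'.abs intG measurableSet_Ioc fun x hx =>
            hptw x (Set.Ioc_subset_Icc_self hx)
      _ = (j:ℝ) * A + (1/(j:ℝ)) * Bv := by
          rw [integral_add (intA.const_mul _) (intV.const_mul _),
            integral_const_mul, integral_const_mul]
  -- decay bound
  have hC₀ : 0 ≤ C₀ := by
    have h1 := (hU0 1 one_pos).trans (hdecay 1 one_pos)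
    simpa using h1
  have hFS : S ^ (2*j) * U S ≤ C₀ / S := by
    have h1 : S ^ (2*j) * U S ≤ S ^ (2*j) * (C₀ * S ^ ((-1:ℝ) - 2 * j)) :=
      mul_le_mul_of_nonneg_left (hdecay S hS) (by positivity)
    have h2 : S ^ (2*j) * (C₀ * S ^ ((-1:ℝ) - 2 * j)) = C₀ / S := by
      rw [← Real.rpow_natCast S (2*j)]
      rw [mul_comm (C₀) _, ← mul_assoc, ← Real.rpow_add hS]
      have : ((2*j : ℕ):ℝ) + ((-1:ℝ) - 2 * j) = -1 := by push_cast; ring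
      rw [this, Real.rpow_neg_one]
      field_simp
    linarith [h1, h2.le]
  have hεnn : 0 ≤ ε ^ (2*j) * U ε := by
    have := hU0 ε hε
    positivity
  -- combine
  have hmain : ((2*j:ℕ):ℝ) * A + B ≤ C₀ / S := by
    have h := hFTC
    rw [hsplit] at h
    linarith [hFS, hεnn, hA]
  have hj1 : (1:ℝ) ≤ j := by exact_mod_cast hj
  push_cast at hmain
  have hAjA : A ≤ (j:ℝ) * A := le_mul_of_one_le_left hAnn hj1
  have hBvj : (1/(j:ℝ)) * Bv ≤ Bv :=
    mul_le_of_le_one_left hBvnn ((div_le_one hjpos).mpr hj1)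
  linarith [neg_abs_le B, hBbound, hmain, hAjA, hBvj]

/-- If `U = U_j` is differentiable with `|U'| ≤ 2√(U·V)` (where
`V = U_{j+1}`) and `U t ≤ C₀ t^(-1-2j)`, then
`∫₀^∞ t^(2j-1) U(t) dt ≤ C ∫₀^∞ s^(2j+1) V(s) ds`, with `C = C(j)`.
The integrals are taken in the extended sense, so the conclusion in particular says that
if the right-hand side is finite then so is the left. -/
theorem stmt_1 (j : ℕ) (hj : 1 ≤ j) :
    ∃ C : ℝ, 0 < C ∧
      ∀ (U U' V : ℝ → ℝ) (C₀ : ℝ),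
        ContinuousOn U (Set.Ioi 0) → ContinuousOn V (Set.Ioi 0) →
        (∀ t, 0 < t → 0 ≤ U t) → (∀ t, 0 < t → 0 ≤ V t) →
        (∀ t, 0 < t → HasDerivAt U (U' t) t) →
        (∀ t, 0 < t → U t ≤ C₀ * t ^ ((-1 : ℝ) - 2 * (j : ℝ))) →
        (∀ s, 0 < s → |U' s| ≤ 2 * Real.sqrt (U s * V s)) →
        ∫⁻ t in Set.Ioi (0 : ℝ), ENNReal.ofReal (t ^ (2 * j - 1) * U t) ≤
          ENNReal.ofReal C * ∫⁻ s in Set.Ioi (0 : ℝ), ENNReal.ofReal (s ^ (2 * j + 1) * V s) := by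
  refine ⟨1, one_pos, ?_⟩
  intro U U' V C₀ hUc hVc hU0 hV0 hder hdecay hU'
  rw [ENNReal.ofReal_one, one_mul]
  set J := ∫⁻ s in Set.Ioi (0:ℝ), ENNReal.ofReal (s ^ (2 * j + 1) * V s) with hJ
  have hC₀ : 0 ≤ C₀ := by
    have h1 := (hU0 1 one_pos).trans (hdecay 1 one_pos)
    simpa using h1
  set s : ℕ → Set ℝ := fun n => Set.Ioc (1/(n+1) : ℝ) (n+1) with hs
  have hmono : Monotone s := by
    intro n m hnm
    have h1 : ((n:ℝ)+1) ≤ (m:ℝ)+1 := by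
      have := (Nat.cast_le (α := ℝ)).mpr hnm; linarith
    exact Set.Ioc_subset_Ioc (one_div_le_one_div_of_le (by positivity) h1) h1
  have hsubIoi : ∀ n : ℕ, Set.Icc (1/((n:ℝ)+1)) ((n:ℝ)+1) ⊆ Set.Ioi (0:ℝ) := by
    intro n x hx
    exact lt_of_lt_of_le (by positivity) hx.1
  have hunion : Set.Ioi (0:ℝ) = ⋃ n, s n := by
    ext x
    simp only [Set.mem_iUnion, hs, Set.mem_Ioc, Set.mem_Ioi]
    constructor
    · intro hx
      obtain ⟨n, hn⟩ := exists_nat_ge (max (1/x) x)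
      refine ⟨n, ?_, ?_⟩
      · have h1 : (1:ℝ)/x < (n:ℝ)+1 :=
          lt_of_le_of_lt ((le_max_left _ _).trans hn) (lt_add_one _)
        rw [div_lt_iff₀ (by positivity : (0:ℝ) < (n:ℝ)+1)]
        rw [div_lt_iff₀ hx] at h1
        linarith [mul_comm x ((n:ℝ)+1) ▸ h1]
      · exact ((le_max_right _ _).trans hn).trans (by linarith)
    · rintro ⟨n, h1, h2⟩
      exact lt_trans (by positivity) h1
  -- bound on each truncation
  have hIn : ∀ n : ℕ, ∫⁻ t in s n, ENNReal.ofReal (t ^ (2*j-1) * U t)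
      ≤ ENNReal.ofReal (C₀ / ((n:ℝ)+1)) + J := by
    intro n
    set ε := (1/(n+1) : ℝ) with hε'
    set S := ((n:ℝ)+1) with hS'
    have hε : 0 < ε := by positivity
    have hεS : ε ≤ S := by
      have h1 : (1:ℝ) ≤ (n:ℝ)+1 := by linarith [Nat.cast_nonneg (α := ℝ) n]
      calc ε ≤ 1 := by rw [hε']; exact div_le_one_of_le₀ h1 (by positivity)
        _ ≤ S := h1
    have hsub : Set.Icc ε S ⊆ Set.Ioi 0 := hsubIoi n
    have hUIcc : ContinuousOn U (Set.Icc ε S) := hUc.mono hsub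
    have hVIcc : ContinuousOn V (Set.Icc ε S) := hVc.mono hsub
    have intA : IntegrableOn (fun t => t ^ (2*j-1) * U t) (Set.Ioc ε S) :=
      (((continuous_pow (2*j-1)).continuousOn.mul hUIcc).integrableOn_Icc).mono_set
        Set.Ioc_subset_Icc_self
    have intV : IntegrableOn (fun t => t ^ (2*j+1) * V t) (Set.Ioc ε S) :=
      (((continuous_pow (2*j+1)).continuousOn.mul hVIcc).integrableOn_Icc).mono_set
        Set.Ioc_subset_Icc_self
    have nnA : 0 ≤ᵐ[volume.restrict (Set.Ioc ε S)] fun t => t ^ (2*j-1) * U t := by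
      filter_upwards [ae_restrict_mem measurableSet_Ioc] with x hx
      have hxpos : 0 < x := hsub (Set.Ioc_subset_Icc_self hx)
      exact mul_nonneg (pow_nonneg hxpos.le _) (hU0 x hxpos)
    have nnV : 0 ≤ᵐ[volume.restrict (Set.Ioc ε S)] fun t => t ^ (2*j+1) * V t := by
      filter_upwards [ae_restrict_mem measurableSet_Ioc] with x hx
      have hxpos : 0 < x := hsub (Set.Ioc_subset_Icc_self hx)
      exact mul_nonneg (pow_nonneg hxpos.le _) (hV0 x hxpos)
    calc ∫⁻ t in s n, ENNReal.ofReal (t ^ (2*j-1) * U t)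
        = ENNReal.ofReal (∫ t in Set.Ioc ε S, t ^ (2*j-1) * U t) :=
          (ofReal_integral_eq_lintegral_ofReal intA nnA).symm
      _ ≤ ENNReal.ofReal (C₀ / S + ∫ t in Set.Ioc ε S, t ^ (2*j+1) * V t) :=
          ENNReal.ofReal_le_ofReal
            (key_ineq j hj U U' V C₀ hUc hVc hU0 hV0 hder hdecay hU' ε S hε hεS)
      _ ≤ ENNReal.ofReal (C₀ / S) +
            ENNReal.ofReal (∫ t in Set.Ioc ε S, t ^ (2*j+1) * V t) :=
          ENNReal.ofReal_add_le
      _ = ENNReal.ofReal (C₀ / S) +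
            ∫⁻ t in Set.Ioc ε S, ENNReal.ofReal (t ^ (2*j+1) * V t) := by
          rw [ofReal_integral_eq_lintegral_ofReal intV nnV]
      _ ≤ ENNReal.ofReal (C₀ / ((n:ℝ)+1)) + J := by
          refine add_le_add le_rfl ?_
          rw [hJ]
          exact lintegral_mono_set (fun x hx => hsub (Set.Ioc_subset_Icc_self hx))
  have hImono : Monotone (fun n => ∫⁻ t in s n, ENNReal.ofReal (t ^ (2*j-1) * U t)) :=
    fun n m h => lintegral_mono_set (hmono h)
  rw [hunion, setLIntegral_iUnion_of_directed _ hmono.directed_le]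
  refine ENNReal.le_of_forall_pos_le_add fun δ hδ hJtop => ?_
  refine iSup_le fun n => ?_
  set m := max n ⌈C₀ / (δ:ℝ)⌉₊ with hm
  have hδR : (0:ℝ) < (δ:ℝ) := hδ
  have hle : C₀ / ((m:ℝ)+1) ≤ (δ:ℝ) := by
    rw [div_le_iff₀ (by positivity)]
    have h1 : C₀ / (δ:ℝ) ≤ (⌈C₀ / (δ:ℝ)⌉₊ : ℝ) := Nat.le_ceil _
    have h2 : ((⌈C₀ / (δ:ℝ)⌉₊ : ℕ) : ℝ) ≤ (m:ℝ) := Nat.cast_le.mpr (le_max_right _ _)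
    rw [div_le_iff₀ hδR] at h1
    nlinarith [hδR]
  calc ∫⁻ t in s n, ENNReal.ofReal (t ^ (2*j-1) * U t)
      ≤ ∫⁻ t in s m, ENNReal.ofReal (t ^ (2*j-1) * U t) := hImono (le_max_left _ _)
    _ ≤ ENNReal.ofReal (C₀ / ((m:ℝ)+1)) + J := hIn m
    _ ≤ (δ:ENNReal) + J := by
        refine add_le_add ?_ le_rfl
        calc ENNReal.ofReal (C₀ / ((m:ℝ)+1)) ≤ ENNReal.ofReal (δ:ℝ) :=
              ENNReal.ofReal_le_ofReal hle
          _ = (δ:ENNReal) := ENNReal.ofReal_coe_nnreal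
    _ = J + δ := add_comm _ _
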